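/- Suppose n ≥ 3, δ ≥ 1, n ≥ 3δ, and there is a Hadamard matrix of order h = n + δ. Then D(n)/n^(n/2) ≥ (4/(ne))^(δ/2), where D(n) is the maximal determinant of an n×n ±1-matrix. -/

import Mathlib

open Matrix

lemma aux_absdet {k : ℕ} (E : Matrix (Fin k) (Fin k) ℝ)
    (hE : ∀ i j, E i j = 1 ∨ E i j = -1) (hdet : E.det ≠ 0) : 1 ≤ |E.det| := by
  classical
  set Ez : Matrix (Fin k) (Fin k) ℤ := fun i j => if E i j = 1 then 1 else -1 with hEz
  have hmap : Ez.map (Int.cast : ℤ → ℝ) = E := by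
    ext i j
    rcases hE i j with h | h <;> simp [Ez, Matrix.map, h] <;> norm_num
  have hdetEz : ((Ez.det : ℤ) : ℝ) = E.det := by
    rw [← hmap]
    have := (RingHom.map_det (Int.castRingHom ℝ) Ez).symm
    rw [RingHom.mapMatrix_apply] at this
    exact this.symm
  have hz : Ez.det ≠ 0 := by
    intro h
    apply hdet
    rw [← hdetEz, h]
    simp
  have h1 : (1 : ℤ) ≤ |Ez.det| := Int.one_le_abs (by omega)
  calc (1:ℝ) = ((1:ℤ):ℝ) := by norm_num
    _ ≤ ((|Ez.det| : ℤ) : ℝ) := by exact_mod_cast h1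
    _ = |E.det| := by rw [← hdetEz]; norm_cast

lemma aux_cols {d h : ℕ} (R : Matrix (Fin d) (Fin h) ℝ)
    (hR : LinearIndependent ℝ (fun i => R i)) :
    ∃ c : Fin d → Fin h, Function.Injective c ∧ (R.submatrix id c).det ≠ 0 := by
  classical
  have hrank : R.rank = d := by
    rw [hR.rank_matrix, Fintype.card_fin]
  have hspan : Submodule.span ℝ (Set.range Rᵀ) = ⊤ := by
    apply Submodule.eq_top_of_finrank_eq
    rw [show Set.range Rᵀ = Set.range R.col from rfl, ← Matrix.rank_eq_finrank_span_cols, hrank, Module.finrank_fintype_fun_eq_card,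
      Fintype.card_fin]
  obtain ⟨b, hbsub, hbspan, hbli⟩ := exists_linearIndependent ℝ (Set.range Rᵀ)
  rw [hspan] at hbspan
  haveI : Fintype b := (hbli.setFinite).fintype
  have hbasis : Module.Basis b ℝ (Fin d → ℝ) := Module.Basis.mk hbli (by rw [Subtype.range_coe, hbspan])
  have hcard : Fintype.card (Fin d) = Fintype.card b := by
    rw [Fintype.card_fin, ← Module.finrank_eq_card_basis hbasis,
      Module.finrank_fintype_fun_eq_card, Fintype.card_fin]
  let e : Fin d ≃ b := Fintype.equivOfCardEq hcard
  have hsel : ∀ j : Fin d, ∃ i : Fin h, Rᵀ i = (e j : Fin d → ℝ) := fun j => hbsub (e j).2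
  choose c hc using hsel
  refine ⟨c, ?_, ?_⟩
  · intro j₁ j₂ hj
    have : (e j₁ : Fin d → ℝ) = (e j₂ : Fin d → ℝ) := by rw [← hc j₁, ← hc j₂, hj]
    exact e.injective (Subtype.ext this)
  · have hcols : (fun j => (R.submatrix id c)ᵀ j) = (fun x : b => (x : Fin d → ℝ)) ∘ e := by
      funext j
      ext i
      simp only [Matrix.transpose_apply, Matrix.submatrix_apply, id_eq, Function.comp_apply]
      have := congrFun (hc j) i
      simpa [Matrix.transpose_apply] using this
    have hli : LinearIndependent ℝ (fun j => (R.submatrix id c)ᵀ j) := by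
      rw [hcols]
      exact hbli.comp e e.injective
    have := Matrix.linearIndependent_cols_iff_isUnit.mp hli
    exact ((Matrix.isUnit_iff_isUnit_det _).mp this).ne_zero

lemma aux_jacobi {α β : Type*} [Fintype α] [Fintype β] [DecidableEq α] [DecidableEq β]
    (M N : Matrix (α ⊕ β) (α ⊕ β) ℝ) (hMN : M * N = 1) :
    M.toBlocks₁₁.det = M.det * N.toBlocks₂₂.det := by
  have key : Matrix.fromBlocks
      (M.toBlocks₁₁ * N.toBlocks₁₁ + M.toBlocks₁₂ * N.toBlocks₂₁)
      (M.toBlocks₁₁ * N.toBlocks₁₂ + M.toBlocks₁₂ * N.toBlocks₂₂)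
      (M.toBlocks₂₁ * N.toBlocks₁₁ + M.toBlocks₂₂ * N.toBlocks₂₁)
      (M.toBlocks₂₁ * N.toBlocks₁₂ + M.toBlocks₂₂ * N.toBlocks₂₂)
      = Matrix.fromBlocks 1 0 0 1 := by
    rw [← Matrix.fromBlocks_multiply, Matrix.fromBlocks_toBlocks, Matrix.fromBlocks_toBlocks,
      hMN, Matrix.fromBlocks_one]
  have e12 : M.toBlocks₁₁ * N.toBlocks₁₂ + M.toBlocks₁₂ * N.toBlocks₂₂ = 0 := by
    have := congrArg Matrix.toBlocks₁₂ key
    simpa only [Matrix.toBlocks_fromBlocks₁₂] using this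
  have e22 : M.toBlocks₂₁ * N.toBlocks₁₂ + M.toBlocks₂₂ * N.toBlocks₂₂ = 1 := by
    have := congrArg Matrix.toBlocks₂₂ key
    simpa only [Matrix.toBlocks_fromBlocks₂₂] using this
  have hmul : M * Matrix.fromBlocks 1 (N.toBlocks₁₂) 0 (N.toBlocks₂₂)
      = Matrix.fromBlocks M.toBlocks₁₁ 0 M.toBlocks₂₁ 1 := by
    conv_lhs => rw [← Matrix.fromBlocks_toBlocks M]
    rw [Matrix.fromBlocks_multiply]
    rw [Matrix.mul_one, Matrix.mul_one, Matrix.mul_zero, Matrix.mul_zero, add_zero, add_zero,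
      e12, e22]
  have := congrArg Matrix.det hmul
  simp only [Matrix.det_mul, Matrix.det_fromBlocks_zero₂₁, Matrix.det_fromBlocks_zero₁₂,
    Matrix.det_one, one_mul, mul_one] at this
  exact this.symm

lemma aux_log (N d : ℝ) (hN : 3 ≤ N) (hd : 1 ≤ d) (hNd : 3*d ≤ N) :
    (d/2) * (Real.log 4 - Real.log N - 1)
      ≤ ((N+d)/2 - d) * Real.log (N+d) - (N/2) * Real.log N := by
  have hN0 : (0:ℝ) < N := by linarith
  have hd0 : (0:ℝ) < d := by linarith
  have hh0 : (0:ℝ) < N + d := by linarith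
  have hexp : (8:ℝ)/3 ≤ Real.exp 1 := by
    have := Real.exp_one_gt_d9
    linarith
  have e1 : d ≤ (N+d) * Real.log (N+d) - (N+d) * Real.log N := by
    have l1 : Real.log (N / (N+d)) ≤ N/(N+d) - 1 :=
      Real.log_le_sub_one_of_pos (by positivity)
    rw [Real.log_div hN0.ne' hh0.ne'] at l1
    have l2 : N/(N+d) - 1 = -(d/(N+d)) := by field_simp; ring
    rw [l2] at l1
    have l3 : d/(N+d) ≤ Real.log (N+d) - Real.log N := by linarith
    have l4 := (div_le_iff₀ hh0).mp l3
    nlinarith [l4]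
  have e2 : Real.log (N+d) ≤ Real.log N + 1 - Real.log 2 := by
    have h2 : N + d ≤ N * Real.exp 1 / 2 := by nlinarith
    have := (Real.log_le_log_iff hh0 (by positivity)).mpr h2
    rw [Real.log_div (by positivity) (by norm_num), Real.log_mul hN0.ne' (by positivity),
      Real.log_exp] at this
    linarith
  have e2' : d * Real.log (N+d) ≤ d * (Real.log N + 1 - Real.log 2) :=
    mul_le_mul_of_nonneg_left e2 hd0.le
  have e3 : d * Real.log 4 = 2 * (d * Real.log 2) := by
    have : Real.log 4 = 2 * Real.log 2 := by
      rw [show (4:ℝ) = 2^2 by norm_num, Real.log_pow]; norm_num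
    rw [this]; ring
  nlinarith [e1, e2', e3]

open Matrix

theorem stmt_19 (n δ : ℕ) (hn : 3 ≤ n) (hδ : 1 ≤ δ) (hnδ : 3 * δ ≤ n)
    (hHad : ∃ H : Matrix (Fin (n + δ)) (Fin (n + δ)) ℝ,
      (∀ i j, H i j = 1 ∨ H i j = -1) ∧
      H * H.transpose = ((n + δ : ℕ) : ℝ) • 1)
    (D : ℝ)
    (hD : IsGreatest {x : ℝ | ∃ A : Matrix (Fin n) (Fin n) ℝ,
      (∀ i j, A i j = 1 ∨ A i j = -1) ∧ x = |A.det|} D) :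
    (4 / ((n : ℝ) * Real.exp 1)) ^ ((δ : ℝ) / 2) ≤ D / (n : ℝ) ^ ((n : ℝ) / 2) := by
  classical
  obtain ⟨H, hent, hHH⟩ := hHad
  set x : ℝ := ((n + δ : ℕ) : ℝ) with hxdef
  have hx0 : (0 : ℝ) < x := by
    rw [hxdef]; exact_mod_cast Nat.lt_of_lt_of_le (by omega) (le_refl (n + δ))
  -- H invertible, rows linearly independent
  have hdetHH : H.det * H.det = x ^ (n + δ) := by
    have := congrArg Matrix.det hHH
    rwa [Matrix.det_mul, Matrix.det_transpose, Matrix.det_smul, Matrix.det_one, mul_one,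
      Fintype.card_fin] at this
  have hdetH_ne : H.det ≠ 0 := by
    intro h0
    rw [h0, zero_mul] at hdetHH
    exact (pow_pos hx0 (n + δ)).ne' hdetHH.symm
  have hHunit : IsUnit H := (Matrix.isUnit_iff_isUnit_det H).mpr (isUnit_iff_ne_zero.mpr hdetH_ne)
  have hrows : LinearIndependent ℝ (fun i => H i) :=
    Matrix.linearIndependent_rows_iff_isUnit.mpr hHunit
  -- choose δ columns making the δ×δ submatrix (in the last δ rows) invertible
  let er : Fin n ⊕ Fin δ ≃ Fin (n + δ) := finSumFinEquiv
  let R : Matrix (Fin δ) (Fin (n + δ)) ℝ := Matrix.of fun i j => H (er (Sum.inr i)) j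
  have hRrows : LinearIndependent ℝ (fun i => R i) := by
    have : (fun i => R i) = (fun i => H i) ∘ (fun i : Fin δ => er (Sum.inr i)) := rfl
    rw [this]
    exact hrows.comp _ (er.injective.comp Sum.inr_injective)
  obtain ⟨c, hcinj, hcdet⟩ := aux_cols R hRrows
  -- build the column equivalence
  let p : Fin (n + δ) → Prop := fun y => y ∈ Set.range c
  have hcards : Fintype.card { y // ¬ p y } = n := by
    have h1 : Fintype.card { y // p y } = δ := by
      rw [Fintype.card_congr (Equiv.ofInjective c hcinj).symm, Fintype.card_fin]
    rw [Fintype.card_subtype_compl, h1, Fintype.card_fin]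
    omega
  let e2 : { y // ¬ p y } ≃ Fin n := Fintype.equivFinOfCardEq hcards
  let e1 : Fin δ ≃ { y // p y } := Equiv.ofInjective c hcinj
  let ec : Fin n ⊕ Fin δ ≃ Fin (n + δ) :=
    (Equiv.sumCongr e2.symm e1).trans ((Equiv.sumComm _ _).trans (Equiv.sumCompl p))
  have hecr : ∀ j, ec (Sum.inr j) = c j := by
    intro j
    simp only [ec, e1, Equiv.trans_apply, Equiv.sumCongr_apply, Sum.map_inr,
      Equiv.sumComm_apply, Sum.swap_inr, Equiv.sumCompl_apply_inl]
    rfl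
  -- the reindexed matrix M and its inverse N
  set M : Matrix (Fin n ⊕ Fin δ) (Fin n ⊕ Fin δ) ℝ := H.submatrix (⇑er) (⇑ec) with hMdef
  set N : Matrix (Fin n ⊕ Fin δ) (Fin n ⊕ Fin δ) ℝ :=
    x⁻¹ • (Hᵀ.submatrix (⇑ec) (⇑er)) with hNdef
  have hsub1 : (x • (1 : Matrix (Fin (n + δ)) (Fin (n + δ)) ℝ)).submatrix ⇑er ⇑er
      = x • (1 : Matrix (Fin n ⊕ Fin δ) (Fin n ⊕ Fin δ) ℝ) := by
    ext i j
    simp [Matrix.submatrix_apply, Matrix.one_apply, Matrix.smul_apply,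
      EmbeddingLike.apply_eq_iff_eq]
  have hMN : M * N = 1 := by
    rw [hMdef, hNdef, Matrix.mul_smul, Matrix.submatrix_mul_equiv H Hᵀ (⇑er) ec (⇑er), hHH,
      hsub1, smul_smul, inv_mul_cancel₀ hx0.ne', one_smul]
  have hdetM2 : M.det * M.det = x ^ (n + δ) := by
    have hMMt : M * Mᵀ = x • 1 := by
      have ht : Mᵀ = Hᵀ.submatrix (⇑ec) (⇑er) := by
        ext i j
        simp [hMdef]
      rw [ht, hMdef, Matrix.submatrix_mul_equiv H Hᵀ (⇑er) ec (⇑er), hHH, hsub1]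
    have := congrArg Matrix.det hMMt
    rwa [Matrix.det_mul, Matrix.det_transpose, Matrix.det_smul, Matrix.det_one, mul_one,
      Fintype.card_sum, Fintype.card_fin, Fintype.card_fin] at this
  -- Jacobi identity
  have hAeq : M.toBlocks₁₁.det = M.det * N.toBlocks₂₂.det := aux_jacobi M N hMN
  have hS : N.toBlocks₂₂ = x⁻¹ • (M.toBlocks₂₂)ᵀ := by
    ext i j
    simp [hNdef, hMdef, Matrix.toBlocks₂₂]
  have hEeq : M.toBlocks₂₂ = R.submatrix id c := by
    ext i j
    simp [hMdef, Matrix.toBlocks₂₂, R, hecr j]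
  have hdetE_ne : M.toBlocks₂₂.det ≠ 0 := by rw [hEeq]; exact hcdet
  have hEent : ∀ i j, M.toBlocks₂₂ i j = 1 ∨ M.toBlocks₂₂ i j = -1 := by
    intro i j
    exact hent _ _
  have hEabs : 1 ≤ |M.toBlocks₂₂.det| := aux_absdet _ hEent hdetE_ne
  have hdetS : N.toBlocks₂₂.det = (x⁻¹) ^ δ * M.toBlocks₂₂.det := by
    rw [hS, Matrix.det_smul, Matrix.det_transpose, Fintype.card_fin]
  -- |det M| = x ^ ((n+δ)/2)
  have habsM : |M.det| = x ^ (((n + δ : ℕ) : ℝ) / 2) := by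
    have h1 : |M.det| = Real.sqrt (x ^ (n + δ)) := by
      rw [← Real.sqrt_sq_eq_abs, sq, hdetM2]
    rw [h1, Real.sqrt_eq_rpow, ← Real.rpow_natCast x (n + δ), ← Real.rpow_mul hx0.le]
    congr 1
    push_cast
    ring
  have hxi : (x⁻¹) ^ δ = x ^ (-(δ : ℝ)) := by
    rw [inv_pow, ← Real.rpow_natCast x δ, ← Real.rpow_neg hx0.le]
  -- lower bound on |det A|
  have habs : |M.toBlocks₁₁.det| = x ^ (((n + δ : ℕ) : ℝ) / 2) * ((x⁻¹) ^ δ * |M.toBlocks₂₂.det|) := by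
    rw [hAeq, abs_mul, hdetS, abs_mul, abs_pow, abs_inv, abs_of_pos hx0, habsM]
  have hstep : x ^ (((n + δ : ℕ) : ℝ) / 2 - (δ : ℝ)) ≤ |M.toBlocks₁₁.det| := by
    have h2 : x ^ (-(δ : ℝ)) * 1 ≤ (x⁻¹) ^ δ * |M.toBlocks₂₂.det| := by
      rw [← hxi]
      exact mul_le_mul_of_nonneg_left hEabs (by positivity)
    calc x ^ (((n + δ : ℕ) : ℝ) / 2 - (δ : ℝ))
        = x ^ (((n + δ : ℕ) : ℝ) / 2) * (x ^ (-(δ : ℝ)) * 1) := by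
          rw [mul_one, ← Real.rpow_add hx0, sub_eq_add_neg]
      _ ≤ x ^ (((n + δ : ℕ) : ℝ) / 2) * ((x⁻¹) ^ δ * |M.toBlocks₂₂.det|) :=
          mul_le_mul_of_nonneg_left h2 (by positivity)
      _ = |M.toBlocks₁₁.det| := habs.symm
  -- the n×n ±1 matrix
  have hAent : ∀ i j, M.toBlocks₁₁ i j = 1 ∨ M.toBlocks₁₁ i j = -1 := by
    intro i j
    exact hent _ _
  have hDge : x ^ (((n + δ : ℕ) : ℝ) / 2 - (δ : ℝ)) ≤ D :=
    le_trans hstep (hD.2 ⟨M.toBlocks₁₁, hAent, rfl⟩)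
  have hDpos : (0 : ℝ) < D := lt_of_lt_of_le (Real.rpow_pos_of_pos hx0 _) hDge
  -- numeric conclusion
  have hnpos : (0 : ℝ) < (n : ℝ) := by exact_mod_cast Nat.lt_of_lt_of_le (by omega) hn
  have hn' : (3 : ℝ) ≤ (n : ℝ) := by exact_mod_cast hn
  have hd' : (1 : ℝ) ≤ (δ : ℝ) := by exact_mod_cast hδ
  have hnd' : 3 * (δ : ℝ) ≤ (n : ℝ) := by exact_mod_cast hnδ
  have hlog := aux_log (n : ℝ) (δ : ℝ) hn' hd' hnd'
  have hxcast : x = (n : ℝ) + (δ : ℝ) := by rw [hxdef]; push_cast; ring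
  have hlogD : (((n + δ : ℕ) : ℝ) / 2 - (δ : ℝ)) * Real.log x ≤ Real.log D := by
    have := (Real.log_le_log_iff (Real.rpow_pos_of_pos hx0 _) hDpos).mpr hDge
    rwa [Real.log_rpow hx0] at this
  have hLpos : (0 : ℝ) < (4 / ((n : ℝ) * Real.exp 1)) ^ ((δ : ℝ) / 2) := by positivity
  have hRpos : (0 : ℝ) < D / (n : ℝ) ^ ((n : ℝ) / 2) := by positivity
  rw [← Real.log_le_log_iff hLpos hRpos, Real.log_rpow (by positivity),
    Real.log_div hDpos.ne' (Real.rpow_pos_of_pos hnpos _).ne', Real.log_rpow hnpos,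
    Real.log_div (by norm_num) (by positivity), Real.log_mul hnpos.ne' (Real.exp_pos 1).ne',
    Real.log_exp]
  have hcast2 : ((n + δ : ℕ) : ℝ) = (n : ℝ) + (δ : ℝ) := by push_cast; ring
  rw [hxcast, hcast2] at hlogD
  linarith [hlog, hlogD]
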